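/- Let z₀ ∈ ℂ, R > 0, and let φ : ℝ → ℝ be measurable and such that ζ ↦ φ(|ζ − z₀|) is integrable on the disk D = { ζ : |ζ − z₀| < R }. Then for every z ∈ ℂ with |z − z₀| > R, ∫_D φ(|ζ − z₀|)/(z − ζ) dA(ζ) = M/(z − z₀), where M = ∫_D φ(|ζ − z₀|) dA(ζ) is the total mass. -/

import Mathlib

open Complex MeasureTheory Real Set


lemma angular_aux {a : ℂ} {r : ℝ} (hr : 0 < r) (ha : r < ‖a‖) :
    ∫ θ in (0:ℝ)..(2*π), (a - circleMap 0 r θ)⁻¹ = 2 * π / a := by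
  have ha0 : a ≠ 0 := by
    intro h; rw [h] at ha; simp at ha; linarith
  have hsub : ∀ w ∈ Metric.closedBall (0:ℂ) r, a - w ≠ 0 := by
    intro w hw h
    rw [sub_eq_zero] at h
    rw [Metric.mem_closedBall, dist_zero_right, ← h] at hw
    exact absurd ha (not_lt.2 hw)
  have h1 : (∮ w in C(0, r), w⁻¹ * (a - w)⁻¹) = 2 * π * I / a := by
    have heq : EqOn (fun w : ℂ => w⁻¹ * (a - w)⁻¹)
        (fun w => a⁻¹ * ((w - 0)⁻¹ - (w - a)⁻¹)) (Metric.sphere (0:ℂ) r) := by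
      intro w hw
      have hw0 : w ≠ 0 := by
        intro h; rw [h] at hw; simp at hw; exact hr.ne' hw.symm
      have hwa : a - w ≠ 0 := hsub w (Metric.sphere_subset_closedBall hw)
      have hwa' : w - a ≠ 0 := fun h => hwa (by rw [← neg_sub] at h; simpa using neg_eq_zero.mp h)
      field_simp
      ring
    rw [circleIntegral.integral_congr hr.le heq]
    have hi1 : CircleIntegrable (fun w : ℂ => (w - 0)⁻¹) 0 r := by
      rw [circleIntegrable_sub_inv_iff]
      right
      simp [abs_of_pos hr]
      exact fun h => hr.ne' h.symm
    have hi2 : CircleIntegrable (fun w : ℂ => (w - a)⁻¹) 0 r := by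
      rw [circleIntegrable_sub_inv_iff]
      right
      intro h
      rw [Metric.mem_sphere, dist_zero_right, abs_of_pos hr] at h
      exact ha.ne' h
    rw [circleIntegral.integral_const_mul, circleIntegral.integral_sub hi1 hi2]
    have e1 : (∮ w in C(0, r), (w - 0)⁻¹) = 2 * π * I :=
      circleIntegral.integral_sub_inv_of_mem_ball (by simpa using hr)
    have e2 : (∮ w in C(0, r), (w - a)⁻¹) = 0 := by
      apply circleIntegral_eq_zero_of_differentiable_on_off_countable hr.le Set.countable_empty
      · apply (continuousOn_id.sub continuousOn_const).inv₀
        intro w hw h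
        rw [Pi.sub_apply, sub_eq_zero] at h
        simp only [id_eq] at h
        exact hsub w hw (by rw [h, sub_self])
      · intro w hw
        apply (differentiable_id.sub_const a).differentiableAt.inv
        intro h
        rw [sub_eq_zero] at h
        simp only [id_eq] at h
        exact hsub w (Metric.ball_subset_closedBall hw.1) (by rw [h, sub_self])
    rw [e1, e2, sub_zero]
    field_simp
  have h2 : (∮ w in C(0, r), w⁻¹ * (a - w)⁻¹)
      = I * ∫ θ in (0:ℝ)..(2*π), (a - circleMap 0 r θ)⁻¹ := by
    rw [circleIntegral, ← intervalIntegral.integral_const_mul]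
    apply intervalIntegral.integral_congr
    intro θ _
    have hne : circleMap 0 r θ ≠ 0 := circleMap_ne_center hr.ne'
    have hwa : a - circleMap 0 r θ ≠ 0 :=
      hsub _ (circleMap_mem_closedBall 0 hr.le θ)
    simp only [deriv_circleMap, smul_eq_mul]
    field_simp
  rw [h2] at h1
  have h3 : I * ∫ θ in (0:ℝ)..(2*π), (a - circleMap 0 r θ)⁻¹ = I * (2 * π / a) := by
    rw [h1]; field_simp
  exact mul_left_cancel₀ I_ne_zero h3


lemma image_polar (R : ℝ) :
    polarCoord.symm '' ((Set.Ioo (0:ℝ) R) ×ˢ (Set.Ioo (-π) π))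
      = polarCoord.source ∩ (Complex.measurableEquivRealProd.symm ⁻¹' (Metric.ball 0 R)) := by
  ext q
  constructor
  · rintro ⟨p, hp, rfl⟩
    have hpt : p ∈ polarCoord.target := by
      rw [polarCoord_target]
      exact ⟨Ioo_subset_Ioi_self hp.1, hp.2⟩
    refine ⟨polarCoord.map_target hpt, ?_⟩
    simp only [Set.mem_preimage, Metric.mem_ball, dist_zero_right]
    have : Complex.measurableEquivRealProd.symm (polarCoord.symm p)
        = Complex.polarCoord.symm p := rfl
    rw [this]
    rw [Complex.norm_polarCoord_symm, abs_of_pos hp.1.1]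
    exact hp.1.2
  · rintro ⟨hq, hq2⟩
    refine ⟨polarCoord q, ⟨⟨?_, ?_⟩, ?_⟩, polarCoord.left_inv hq⟩
    · exact (polarCoord.map_source hq).1
    · have : (polarCoord q).1 = ‖Complex.measurableEquivRealProd.symm q‖ := by
        rw [polarCoord_apply, Complex.norm_def]
        simp [Complex.normSq_apply, Complex.measurableEquivRealProd_symm_apply, ← pow_two]
      rw [this]
      simpa using hq2
    · exact ⟨(polarCoord.map_source hq).2.1, (polarCoord.map_source hq).2.2⟩

lemma polar_ball {E : Type*} [NormedAddCommGroup E] [NormedSpace ℝ E]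
    {R : ℝ} (hR : 0 < R) (f : ℂ → E) (hf : IntegrableOn f (Metric.ball 0 R)) :
    (∫ w in Metric.ball (0:ℂ) R, f w)
        = (∫ p in (Set.Ioo (0:ℝ) R) ×ˢ (Set.Ioo (-π) π), p.1 • f (circleMap 0 p.1 p.2))
      ∧ IntegrableOn (fun p : ℝ × ℝ => p.1 • f (circleMap 0 p.1 p.2))
        ((Set.Ioo (0:ℝ) R) ×ˢ (Set.Ioo (-π) π)) := by
  set s : Set (ℝ × ℝ) := (Set.Ioo (0:ℝ) R) ×ˢ (Set.Ioo (-π) π) with hs_def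
  set Bs : Set (ℝ × ℝ) := Complex.measurableEquivRealProd.symm ⁻¹' (Metric.ball 0 R) with hBs_def
  set g : ℝ × ℝ → E := fun q => f (Complex.measurableEquivRealProd.symm q) with hg_def
  set B : ℝ × ℝ → ℝ × ℝ →L[ℝ] ℝ × ℝ := fun p =>
    LinearMap.toContinuousLinearMap (Matrix.toLin (Module.Basis.finTwoProd ℝ) (Module.Basis.finTwoProd ℝ)
      !![Real.cos p.2, -p.1 * Real.sin p.2; Real.sin p.2, p.1 * Real.cos p.2]) with hB_def
  have hs_meas : MeasurableSet s := measurableSet_Ioo.prod measurableSet_Ioo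
  have hsub : s ⊆ polarCoord.target := by
    rw [polarCoord_target]
    exact Set.prod_mono Set.Ioo_subset_Ioi_self subset_rfl
  have hf' : ∀ p ∈ s, HasFDerivWithinAt polarCoord.symm (B p) s p := fun p _ =>
    (hasFDerivAt_polarCoord_symm p).hasFDerivWithinAt
  have hinj : Set.InjOn polarCoord.symm s := by
    have := polarCoord.symm.injOn
    rw [OpenPartialHomeomorph.symm_source] at this
    exact this.mono hsub
  have hB_det : ∀ p, (B p).det = p.1 := by
    intro p
    conv_rhs => rw [← one_mul p.1, ← Real.cos_sq_add_sin_sq p.2]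
    simp only [hB_def, neg_mul, LinearMap.det_toContinuousLinearMap, LinearMap.det_toLin,
      Matrix.det_fin_two_of, sub_neg_eq_add]
    ring
  -- transfer integral and integrability through the real-product identification
  have hIg : IntegrableOn g Bs := by
    rw [hBs_def]
    exact (Complex.volume_preserving_equiv_real_prod.symm).integrableOn_comp_preimage
      Complex.measurableEquivRealProd.symm.measurableEmbedding |>.mpr hf
  have hIball : (∫ w in Metric.ball (0:ℂ) R, f w) = ∫ q in Bs, g q := by
    rw [hBs_def]
    exact ((Complex.volume_preserving_equiv_real_prod.symm).setIntegral_preimage_emb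
      Complex.measurableEquivRealProd.symm.measurableEmbedding f (Metric.ball 0 R)).symm
  have himg := image_polar R
  have hae : (polarCoord.symm '' s : Set (ℝ × ℝ)) =ᵐ[volume] Bs := by
    rw [himg]
    exact (Filter.EventuallyEq.inter polarCoord_source_ae_eq_univ (Filter.EventuallyEq.refl _ Bs)).trans
      (Filter.EventuallyEq.of_eq (Set.univ_inter Bs))
  have key : ∀ p ∈ s, |(B p).det| • g (polarCoord.symm p) = p.1 • f (circleMap 0 p.1 p.2) := by
    intro p hp
    have h1 : |(B p).det| = p.1 := by rw [hB_det, abs_of_pos hp.1.1]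
    have h2 : (Complex.measurableEquivRealProd.symm (polarCoord.symm p) : ℂ)
        = circleMap 0 p.1 p.2 := by
      have : Complex.measurableEquivRealProd.symm (polarCoord.symm p)
          = Complex.polarCoord.symm p := rfl
      rw [this, Complex.polarCoord_symm_apply, circleMap, Complex.exp_mul_I]
      push_cast
      ring
    rw [h1]
    simp only [hg_def]
    rw [h2]
  constructor
  · calc (∫ w in Metric.ball (0:ℂ) R, f w) = ∫ q in Bs, g q := hIball
      _ = ∫ q in polarCoord.symm '' s, g q := (setIntegral_congr_set hae).symm
      _ = ∫ p in s, |(B p).det| • g (polarCoord.symm p) :=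
          integral_image_eq_integral_abs_det_fderiv_smul volume hs_meas hf' hinj g
      _ = ∫ p in s, p.1 • f (circleMap 0 p.1 p.2) := setIntegral_congr_fun hs_meas key
  · have : IntegrableOn g (polarCoord.symm '' s) := hIg.mono_set (by rw [himg]; exact Set.inter_subset_right)
    rw [integrableOn_image_iff_integrableOn_abs_det_fderiv_smul volume hs_meas hf' hinj g] at this
    exact this.congr_fun key hs_meas

lemma angular_Ioo {a : ℂ} {r : ℝ} (hr : 0 < r) (ha : r < ‖a‖) :
    ∫ θ in Set.Ioo (-π) π, (a - circleMap 0 r θ)⁻¹ = 2 * π / a := by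
  have hper : Function.Periodic (fun θ => (a - circleMap 0 r θ)⁻¹) (2 * π) :=
    (periodic_circleMap 0 r).comp fun w => (a - w)⁻¹
  have h1 : ∫ θ in Set.Ioo (-π) π, (a - circleMap 0 r θ)⁻¹
      = ∫ θ in (-π)..π, (a - circleMap 0 r θ)⁻¹ := by
    rw [intervalIntegral.integral_of_le (by linarith [Real.pi_pos]), integral_Ioc_eq_integral_Ioo]
  have h2 := hper.intervalIntegral_add_eq (-π) 0
  have h3 : -π + 2 * π = π := by ring
  rw [h3, zero_add] at h2
  rw [h1, h2]
  exact angular_aux hr ha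

lemma translate_ball_integral {E : Type*} [NormedAddCommGroup E] [NormedSpace ℝ E]
    (z₀ : ℂ) (R : ℝ) (f : ℂ → E) :
    (∫ ζ in Metric.ball z₀ R, f (ζ - z₀)) = ∫ w in Metric.ball (0:ℂ) R, f w := by
  have hpre : ((· + z₀) : ℂ → ℂ) ⁻¹' Metric.ball z₀ R = Metric.ball (0:ℂ) R := by
    ext w
    simp [Metric.mem_ball, dist_eq_norm, add_sub_cancel_right]
  have := (measurePreserving_add_right volume z₀).setIntegral_preimage_emb
    (measurableEmbedding_addRight z₀) (fun ζ => f (ζ - z₀)) (Metric.ball z₀ R)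
  rw [hpre] at this
  simp only [add_sub_cancel_right] at this
  exact this.symm

/-- Planar Newton's theorem: the Cauchy transform of a radially symmetric mass density
supported in a disk, evaluated outside the disk, equals the Cauchy kernel of a point
mass at the center carrying the total mass. -/
theorem cauchy_transform_radial_density
    (z₀ : ℂ) (R : ℝ) (hR : 0 < R) (φ : ℝ → ℝ) (hmeas : Measurable φ)
    (hinteg : IntegrableOn (fun ζ : ℂ => φ (‖ζ - z₀‖)) (Metric.ball z₀ R))
    (z : ℂ) (hz : R < ‖z - z₀‖) :
    ∫ ζ in Metric.ball z₀ R, (φ (‖ζ - z₀‖) : ℂ) / (z - ζ)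
      = ((∫ ζ in Metric.ball z₀ R, φ (‖ζ - z₀‖) : ℝ) : ℂ) / (z - z₀) := by
  set a : ℂ := z - z₀ with ha_def
  have haR : (0:ℝ) < ‖a‖ - R := by linarith
  -- integrability of the radial profile on the centered ball
  have hphi0 : IntegrableOn (fun w : ℂ => φ (‖w‖)) (Metric.ball 0 R) := by
    have hpre : ((· + z₀) : ℂ → ℂ) ⁻¹' Metric.ball z₀ R = Metric.ball (0:ℂ) R := by
      ext w
      simp [Metric.mem_ball, dist_eq_norm, add_sub_cancel_right]
    have := ((measurePreserving_add_right volume z₀).integrableOn_comp_preimage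
      (measurableEmbedding_addRight z₀)).mpr hinteg
    rw [hpre] at this
    simpa [Function.comp_def, add_sub_cancel_right] using this
  -- the centered integrand
  set f : ℂ → ℂ := fun w => (φ (‖w‖) : ℂ) * (a - w)⁻¹ with hf_def
  have hbound : ∀ w ∈ Metric.ball (0:ℂ) R, ‖f w‖ ≤ (‖a‖ - R)⁻¹ * |φ (‖w‖)| := by
    intro w hw
    rw [Metric.mem_ball, dist_zero_right] at hw
    have h1 : ‖a‖ - R ≤ ‖a - w‖ := by
      have h := norm_sub_norm_le a w
      have hwa : ‖w‖ < R := hw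
      linarith [h]
    have h2 : ‖(a - w)⁻¹‖ ≤ (‖a‖ - R)⁻¹ := by
      rw [norm_inv]
      exact inv_anti₀ haR h1
    calc ‖f w‖ = |φ (‖w‖)| * ‖(a - w)⁻¹‖ := by
          rw [hf_def, norm_mul, Complex.norm_real, Real.norm_eq_abs]
      _ ≤ |φ (‖w‖)| * (‖a‖ - R)⁻¹ :=
          mul_le_mul_of_nonneg_left h2 (abs_nonneg _)
      _ = (‖a‖ - R)⁻¹ * |φ (‖w‖)| := mul_comm _ _
  have hfint : IntegrableOn f (Metric.ball (0:ℂ) R) := by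
    apply Integrable.mono' ((hphi0.norm).const_mul ((‖a‖ - R)⁻¹))
    · apply Measurable.aestronglyMeasurable
      exact (Complex.measurable_ofReal.comp (hmeas.comp continuous_norm.measurable)).mul
        ((measurable_const.sub measurable_id).inv)
    · filter_upwards [ae_restrict_mem measurableSet_ball] with w hw
      simpa using hbound w hw
  -- LHS via translation and polar coordinates
  have hLHS1 : (∫ ζ in Metric.ball z₀ R, (φ (‖ζ - z₀‖) : ℂ) / (z - ζ))
      = ∫ w in Metric.ball (0:ℂ) R, f w := by
    rw [← translate_ball_integral z₀ R f]
    apply setIntegral_congr_fun measurableSet_ball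
    intro ζ _
    simp only [hf_def]
    have h : z - ζ = a - (ζ - z₀) := by rw [ha_def]; ring
    rw [← h, div_eq_mul_inv]
  have hpolarC := polar_ball hR f hfint
  have hpolarR := polar_ball hR (fun w => φ (‖w‖)) hphi0
  have hMass : (∫ ζ in Metric.ball z₀ R, φ (‖ζ - z₀‖))
      = ∫ p in (Set.Ioo (0:ℝ) R) ×ˢ (Set.Ioo (-π) π),
          p.1 • φ (‖circleMap 0 p.1 p.2‖) := by
    exact (translate_ball_integral z₀ R (fun w => φ (‖w‖))).symm.symm.trans hpolarR.1
  rw [hLHS1, hpolarC.1, hMass]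
  -- Fubini on both sides
  have hvol : (volume : Measure (ℝ × ℝ)) = Measure.prod volume volume :=
    Measure.volume_eq_prod ℝ ℝ
  have hIC := hpolarC.2
  have hIR := hpolarR.2
  rw [IntegrableOn, hvol] at hIC hIR
  rw [hvol, setIntegral_prod _ hIC, setIntegral_prod _ hIR]
  -- compute inner integrals
  have habs : ∀ r ∈ Set.Ioo (0:ℝ) R, ∀ θ : ℝ, ‖circleMap 0 r θ‖ = r := by
    intro r hr θ
    rw [norm_circleMap_zero, abs_of_pos hr.1]
  have hCinner : ∀ r ∈ Set.Ioo (0:ℝ) R,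
      (∫ θ in Set.Ioo (-π) π, r • f (circleMap 0 r θ))
        = ((r * φ r : ℝ) : ℂ) * (2 * π / a) := by
    intro r hr
    have he : ∀ θ : ℝ, r • f (circleMap 0 r θ)
        = ((r * φ r : ℝ) : ℂ) * (a - circleMap 0 r θ)⁻¹ := by
      intro θ
      simp only [hf_def, habs r hr θ, Complex.real_smul]
      push_cast
      ring
    simp_rw [he]
    rw [MeasureTheory.integral_const_mul, angular_Ioo hr.1 (hr.2.trans hz)]
  have hRinner : ∀ r ∈ Set.Ioo (0:ℝ) R,
      (∫ θ in Set.Ioo (-π) π, r • φ (‖circleMap 0 r θ‖))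
        = 2 * π * (r * φ r) := by
    intro r hr
    have he : ∀ θ : ℝ, r • φ (‖circleMap 0 r θ‖) = r * φ r := by
      intro θ
      rw [habs r hr θ, smul_eq_mul]
    simp_rw [he]
    rw [setIntegral_const, smul_eq_mul, measureReal_def, Real.volume_Ioo,
      ENNReal.toReal_ofReal (by linarith [Real.pi_pos])]
    ring
  rw [setIntegral_congr_fun measurableSet_Ioo hCinner,
    setIntegral_congr_fun measurableSet_Ioo hRinner, integral_mul_const,
    show (∫ r in Set.Ioo (0:ℝ) R, ((r * φ r : ℝ) : ℂ)) = ((∫ r in Set.Ioo (0:ℝ) R, (r * φ r : ℝ) : ℝ) : ℂ) from integral_ofReal,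
    MeasureTheory.integral_const_mul]
  push_cast
  ring
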